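/- If A ∈ ℝ^{n×n} satisfies ‖A⁻¹‖ < 1 (spectral norm), then the absolute value equation Ax − |x| = b has a unique solution x ∈ ℝ^n for every b ∈ ℝ^n. -/

import Mathlib

open Matrix

def IsZMatrix {n : ℕ} (A : Matrix (Fin n) (Fin n) ℝ) : Prop :=
  ∀ i j, i ≠ j → A i j ≤ 0

/-- An M-matrix: a Z-matrix that is invertible with entrywise nonnegative inverse. -/
def IsMMatrix {n : ℕ} (A : Matrix (Fin n) (Fin n) ℝ) : Prop :=
  IsZMatrix A ∧ IsUnit A ∧ ∀ i j, 0 ≤ A⁻¹ i j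

/-- D(x) = diag(sign(x)). -/
noncomputable def signD {n : ℕ} (x : Fin n → ℝ) : Matrix (Fin n) (Fin n) ℝ :=
  Matrix.diagonal (fun i => Real.sign (x i))

/-- Componentwise absolute value. -/
def absVec {n : ℕ} (x : Fin n → ℝ) : Fin n → ℝ := fun i => |x i|

/-- Spectral (operator 2-) norm of a matrix. -/
noncomputable def specNorm {n : ℕ} (A : Matrix (Fin n) (Fin n) ℝ) : ℝ :=
  ‖Matrix.toEuclideanCLM (𝕜 := ℝ) A‖

lemma absVec_lip {n : ℕ} (x y : EuclideanSpace ℝ (Fin n)) :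
    ‖(WithLp.equiv 2 (Fin n → ℝ)).symm (absVec (WithLp.equiv 2 (Fin n → ℝ) x))
      - (WithLp.equiv 2 (Fin n → ℝ)).symm (absVec (WithLp.equiv 2 (Fin n → ℝ) y))‖ ≤ ‖x - y‖ := by
  have h1 : ∀ (u v : EuclideanSpace ℝ (Fin n)) (i : Fin n), (u - v) i = u i - v i := by
    intros; rfl
  rw [EuclideanSpace.norm_eq, EuclideanSpace.norm_eq]
  apply Real.sqrt_le_sqrt
  apply Finset.sum_le_sum
  intro i _
  rw [h1, h1]
  simp only [WithLp.equiv_symm_apply, WithLp.equiv_apply, PiLp.toLp_apply, absVec, Real.norm_eq_abs]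
  have h2 : |(|x i| - |y i|)| ≤ |x i - y i| := abs_abs_sub_abs_le_abs_sub _ _
  calc |(|x i| - |y i|)| ^ 2 ≤ |x i - y i| ^ 2 := pow_le_pow_left₀ (abs_nonneg _) h2 2
    _ = |x i - y i| ^ 2 := rfl

theorem stmt_1 {n : ℕ} (A : Matrix (Fin n) (Fin n) ℝ)
    (hA : IsUnit A) (hnorm : specNorm A⁻¹ < 1) :
    ∀ b : Fin n → ℝ, ∃! x : Fin n → ℝ, A.mulVec x - absVec x = b := by
  intro b
  set T := Matrix.toEuclideanCLM (𝕜 := ℝ) A⁻¹ with hT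
  set e := WithLp.equiv 2 (Fin n → ℝ) with he
  set F : EuclideanSpace ℝ (Fin n) → EuclideanSpace ℝ (Fin n) :=
    fun x => T (e.symm (absVec (e x) + b)) with hF
  have hdetA : IsUnit A.det := (Matrix.isUnit_iff_isUnit_det A).mp hA
  have hcontr : ContractingWith ‖T‖₊ F := by
    constructor
    · exact_mod_cast hnorm
    · apply LipschitzWith.of_dist_le_mul
      intro x y
      rw [dist_eq_norm, dist_eq_norm]
      have h1 : F x - F y = T (e.symm (absVec (e x) + b) - e.symm (absVec (e y) + b)) := by
        rw [map_sub]
      have h2 : e.symm (absVec (e x) + b) - e.symm (absVec (e y) + b)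
          = e.symm (absVec (e x)) - e.symm (absVec (e y)) := by
        ext i
        show (absVec (e x) + b) i - (absVec (e y) + b) i = absVec (e x) i - absVec (e y) i
        simp only [Pi.add_apply]
        ring
      calc ‖F x - F y‖ = ‖T (e.symm (absVec (e x) + b) - e.symm (absVec (e y) + b))‖ := by
            rw [h1]
        _ ≤ ‖T‖ * ‖e.symm (absVec (e x) + b) - e.symm (absVec (e y) + b)‖ := T.le_opNorm _
        _ ≤ ‖T‖ * ‖x - y‖ := by
            apply mul_le_mul_of_nonneg_left _ (norm_nonneg _)
            rw [h2]
            exact absVec_lip x y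
        _ = ↑‖T‖₊ * ‖x - y‖ := by rw [coe_nnnorm]
  have hchar : ∀ x : Fin n → ℝ, (A.mulVec x - absVec x = b) ↔ F (e.symm x) = e.symm x := by
    intro x
    have hTapp : F (e.symm x) = e.symm (A⁻¹ *ᵥ (absVec x + b)) := by
      simp only [hF]
      simp only [he, hT, WithLp.equiv_symm_apply, Matrix.toEuclideanCLM_toLp]
      simp [Matrix.toLin'_apply]
    rw [hTapp]
    constructor
    · intro h
      have hAx : A.mulVec x = absVec x + b := by rw [← h]; abel
      apply congrArg e.symm
      rw [← hAx, Matrix.mulVec_mulVec, Matrix.nonsing_inv_mul A hdetA, Matrix.one_mulVec]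
    · intro h
      have h2 : x = A⁻¹ *ᵥ (absVec x + b) := (e.symm.injective h).symm
      have h3 : A *ᵥ x = absVec x + b := by
        conv_lhs => rw [h2]
        rw [Matrix.mulVec_mulVec, Matrix.mul_nonsing_inv A hdetA, Matrix.one_mulVec]
      rw [h3]; abel
  obtain ⟨y, hy⟩ : ∃ y : EuclideanSpace ℝ (Fin n), F y = y :=
    ⟨_, hcontr.fixedPoint_isFixedPt⟩
  refine ⟨e y, ?_, ?_⟩
  · show A.mulVec (e y) - absVec (e y) = b
    rw [hchar]
    simpa using hy
  · intro x hx
    rw [hchar] at hx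
    have h3 : e.symm x = y := hcontr.fixedPoint_unique' hx hy
    calc x = e (e.symm x) := rfl
      _ = e y := by rw [h3]
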